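/- A power bounded operator T on a Hilbert space is similar to an isometry if and only if there exists a constant c > 0 such that ‖T^n x‖ ≥ c ‖x‖ for every x ∈ H and every n ∈ ℕ. -/

import Mathlib

open ContinuousLinearMap Filter Topology
open scoped InnerProductSpace ComplexConjugate

/-- A power bounded operator `T` is similar to an isometry if and only if there is a
constant `c > 0` such that `‖T^n x‖ ≥ c ‖x‖` for every `x` and every `n`. -/
theorem stmt8 {H : Type*} [NormedAddCommGroup H] [InnerProductSpace ℂ H] [CompleteSpace H]
    (T : H →L[ℂ] H) (hT : ∃ C : ℝ, ∀ n : ℕ, ‖T ^ n‖ ≤ C) :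
    (∃ X X' V : H →L[ℂ] H, X ∘L X' = 1 ∧ X' ∘L X = 1 ∧
        (∀ x : H, ‖V x‖ = ‖x‖) ∧ T = X' ∘L V ∘L X) ↔
    (∃ c : ℝ, 0 < c ∧ ∀ (x : H) (n : ℕ), c * ‖x‖ ≤ ‖(T ^ n) x‖) := by
  constructor
  · rintro ⟨X, X', V, hXX', hX'X, hV, rfl⟩
    have hXX'p : ∀ y, X (X' y) = y := fun y => by
      simpa using DFunLike.congr_fun hXX' y
    have hX'Xp : ∀ y, X' (X y) = y := fun y => by
      simpa using DFunLike.congr_fun hX'X y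
    have hpow : ∀ n : ℕ, (X' ∘L V ∘L X) ^ n = X' ∘L (V ^ n) ∘L X := by
      intro n
      induction n with
      | zero => ext v; simp [hX'Xp]
      | succ n ih =>
        rw [pow_succ, ih, pow_succ]
        ext v
        simp [mul_apply, comp_apply, hXX'p]
    have hVn : ∀ (n : ℕ) (y : H), ‖(V ^ n) y‖ = ‖y‖ := by
      intro n
      induction n with
      | zero => intro y; simp
      | succ n ih => intro y; rw [pow_succ, ContinuousLinearMap.mul_apply, ih, hV]
    refine ⟨((‖X‖ + 1) * (‖X'‖ + 1))⁻¹, by positivity, fun x n => ?_⟩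
    have h1 : ‖x‖ ≤ (‖X‖ + 1) * (‖X'‖ + 1) * ‖((X' ∘L V ∘L X) ^ n) x‖ := by
      have e1 : ‖x‖ ≤ ‖X'‖ * ‖X x‖ := by
        calc ‖x‖ = ‖X' (X x)‖ := by rw [hX'Xp]
          _ ≤ ‖X'‖ * ‖X x‖ := X'.le_opNorm _
      have e2 : ‖X x‖ = ‖(V ^ n) (X x)‖ := (hVn n _).symm
      have e3 : ‖(V ^ n) (X x)‖ ≤ ‖X‖ * ‖((X' ∘L V ∘L X) ^ n) x‖ := by
        calc ‖(V ^ n) (X x)‖ = ‖X (X' ((V ^ n) (X x)))‖ := by rw [hXX'p]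
          _ ≤ ‖X‖ * ‖X' ((V ^ n) (X x))‖ := X.le_opNorm _
          _ = ‖X‖ * ‖((X' ∘L V ∘L X) ^ n) x‖ := by rw [hpow]; rfl
      calc ‖x‖ ≤ ‖X'‖ * ‖X x‖ := e1
        _ = ‖X'‖ * ‖(V ^ n) (X x)‖ := by rw [e2]
        _ ≤ ‖X'‖ * (‖X‖ * ‖((X' ∘L V ∘L X) ^ n) x‖) := by
            exact mul_le_mul_of_nonneg_left e3 (norm_nonneg _)
        _ ≤ (‖X‖ + 1) * (‖X'‖ + 1) * ‖((X' ∘L V ∘L X) ^ n) x‖ := by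
            nlinarith [norm_nonneg X, norm_nonneg X', norm_nonneg (((X' ∘L V ∘L X) ^ n) x)]
    rw [inv_mul_le_iff₀ (by positivity)]
    linarith
  · rintro ⟨c, hc, hlow⟩
    obtain ⟨C, hC⟩ := hT
    have hC0 : 0 ≤ C := le_trans (norm_nonneg _) (hC 0)
    have hTb : ∀ (n : ℕ) (x : H), ‖(T ^ n) x‖ ≤ C * ‖x‖ :=
      fun n x => (T ^ n).le_of_opNorm_le (hC n) x
    set U : Ultrafilter ℕ := Filter.hyperfilter ℕ with hU
    have hUatTop : (U : Filter ℕ) ≤ atTop := Nat.cofinite_eq_atTop ▸ Filter.hyperfilter_le_cofinite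
    set g : H → H → ℕ → ℂ :=
      fun x y N => (((N + 1 : ℕ) : ℂ))⁻¹ * ∑ n ∈ Finset.range (N + 1), ⟪(T ^ n) x, (T ^ n) y⟫_ℂ
      with hg
    have hterm : ∀ (x y : H) (n : ℕ), ‖⟪(T ^ n) x, (T ^ n) y⟫_ℂ‖ ≤ C ^ 2 * ‖x‖ * ‖y‖ := by
      intro x y n
      calc ‖⟪(T ^ n) x, (T ^ n) y⟫_ℂ‖ ≤ ‖(T ^ n) x‖ * ‖(T ^ n) y‖ := norm_inner_le_norm _ _
        _ ≤ (C * ‖x‖) * (C * ‖y‖) :=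
          mul_le_mul (hTb n x) (hTb n y) (norm_nonneg _) (by positivity)
        _ = C ^ 2 * ‖x‖ * ‖y‖ := by ring
    have hgbdd : ∀ (x y : H) (N : ℕ), ‖g x y N‖ ≤ C ^ 2 * ‖x‖ * ‖y‖ := by
      intro x y N
      rw [hg]
      simp only [norm_mul, norm_inv, Complex.norm_natCast]
      calc ((N + 1 : ℕ) : ℝ)⁻¹ * ‖∑ n ∈ Finset.range (N + 1), ⟪(T ^ n) x, (T ^ n) y⟫_ℂ‖
          ≤ ((N + 1 : ℕ) : ℝ)⁻¹ * ∑ n ∈ Finset.range (N + 1), ‖⟪(T ^ n) x, (T ^ n) y⟫_ℂ‖ := by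
            gcongr
            exact norm_sum_le _ _
        _ ≤ ((N + 1 : ℕ) : ℝ)⁻¹ * ∑ _n ∈ Finset.range (N + 1), (C ^ 2 * ‖x‖ * ‖y‖) := by
            gcongr with n hn
            exact hterm x y n
        _ = C ^ 2 * ‖x‖ * ‖y‖ := by
            rw [Finset.sum_const, Finset.card_range, nsmul_eq_mul]
            field_simp
    have hex : ∀ x y : H, ∃ L, Tendsto (g x y) (U : Filter ℕ) (𝓝 L) := by
      intro x y
      have hmem : (U.map (g x y) : Filter ℂ) ≤ 𝓟 (Metric.closedBall (0 : ℂ) (C ^ 2 * ‖x‖ * ‖y‖)) := by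
        rw [Ultrafilter.coe_map, Filter.le_principal_iff, Filter.mem_map]
        exact Filter.univ_mem' fun N => by
          simpa [Metric.mem_closedBall, dist_zero_right] using hgbdd x y N
      obtain ⟨L, -, hL⟩ := (isCompact_closedBall (0 : ℂ) (C ^ 2 * ‖x‖ * ‖y‖)).ultrafilter_le_nhds
        (U.map (g x y)) hmem
      exact ⟨L, by rwa [Ultrafilter.coe_map] at hL⟩
    choose B hB using hex
    -- second-argument linearity
    have hBadd2 : ∀ x y z : H, B x (y + z) = B x y + B x z := by
      intro x y z
      refine tendsto_nhds_unique (hB x (y + z)) (((hB x y).add (hB x z)).congr fun N => ?_)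
      rw [hg]
      simp [inner_add_right, Finset.sum_add_distrib, mul_add]
    have hBsmul2 : ∀ (a : ℂ) (x y : H), B x (a • y) = a * B x y := by
      intro a x y
      refine tendsto_nhds_unique (hB x (a • y)) (((hB x y).const_mul a).congr fun N => ?_)
      rw [hg]
      simp only [map_smul, inner_smul_right, ← Finset.mul_sum]
      ring
    -- conjugate symmetry
    have hconj : ∀ x y : H, conj (B x y) = B y x := by
      intro x y
      refine tendsto_nhds_unique (((Complex.continuous_conj.tendsto _).comp (hB x y)).congr
        fun N => ?_) (hB y x)
      rw [hg]
      simp [map_mul, map_inv₀, map_sum, inner_conj_symm]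
    -- T-invariance
    have hpow1 : ∀ (n : ℕ) (v : H), (T ^ n) (T v) = (T ^ (n + 1)) v := by
      intro n v; rw [pow_succ, ContinuousLinearMap.mul_apply]
    have hBT : ∀ x y : H, B (T x) (T y) = B x y := by
      intro x y
      refine tendsto_nhds_unique (hB (T x) (T y)) ?_
      have key : ∀ N : ℕ, g (T x) (T y) N =
          g x y N + (((N + 1 : ℕ) : ℂ))⁻¹ *
            (⟪(T ^ (N + 1)) x, (T ^ (N + 1)) y⟫_ℂ - ⟪x, y⟫_ℂ) := by
        intro N
        rw [hg]
        simp only [hpow1]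
        have : ∑ n ∈ Finset.range (N + 1), ⟪(T ^ (n + 1)) x, (T ^ (n + 1)) y⟫_ℂ =
            (∑ n ∈ Finset.range (N + 1), ⟪(T ^ n) x, (T ^ n) y⟫_ℂ)
              + (⟪(T ^ (N + 1)) x, (T ^ (N + 1)) y⟫_ℂ - ⟪x, y⟫_ℂ) := by
          have h2 := Finset.sum_range_succ' (fun n => ⟪(T ^ n) x, (T ^ n) y⟫_ℂ) (N + 1)
          rw [Finset.sum_range_succ (fun n => ⟪(T ^ n) x, (T ^ n) y⟫_ℂ) (N + 1)] at h2
          simp only [pow_zero, ContinuousLinearMap.one_apply] at h2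
          linear_combination -h2
        rw [this, mul_add]
      have herr : Tendsto (fun N : ℕ => (((N + 1 : ℕ) : ℂ))⁻¹ *
          (⟪(T ^ (N + 1)) x, (T ^ (N + 1)) y⟫_ℂ - ⟪x, y⟫_ℂ)) (U : Filter ℕ) (𝓝 0) := by
        apply Tendsto.mono_left ?_ hUatTop
        apply squeeze_zero_norm (a := fun N : ℕ => ((N + 1 : ℕ) : ℝ)⁻¹ * (2 * (C ^ 2 * ‖x‖ * ‖y‖)))
        · intro N
          rw [norm_mul, norm_inv, Complex.norm_natCast]
          gcongr
          calc ‖⟪(T ^ (N + 1)) x, (T ^ (N + 1)) y⟫_ℂ - ⟪x, y⟫_ℂ‖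
              ≤ ‖⟪(T ^ (N + 1)) x, (T ^ (N + 1)) y⟫_ℂ‖ + ‖⟪x, y⟫_ℂ‖ := norm_sub_le _ _
            _ ≤ C ^ 2 * ‖x‖ * ‖y‖ + C ^ 2 * ‖x‖ * ‖y‖ := by
                refine add_le_add (hterm x y (N + 1)) ?_
                simpa using hterm x y 0
            _ = 2 * (C ^ 2 * ‖x‖ * ‖y‖) := by ring
        · rw [show (0 : ℝ) = 0 * (2 * (C ^ 2 * ‖x‖ * ‖y‖)) by ring]
          apply Tendsto.mul_const
          exact tendsto_inv_atTop_zero.comp (tendsto_natCast_atTop_atTop.comp (tendsto_add_atTop_nat 1))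
      have := (hB x y).add herr
      rw [add_zero] at this
      exact this.congr fun N => (key N).symm
    -- norm bound on B
    have hBnorm : ∀ x y : H, ‖B x y‖ ≤ C ^ 2 * ‖x‖ * ‖y‖ := by
      intro x y
      exact le_of_tendsto ((continuous_norm.tendsto _).comp (hB x y))
        (Filter.Eventually.of_forall fun N => hgbdd x y N)
    -- lower bound on re (B x x)
    have hBre : ∀ x : H, c ^ 2 * ‖x‖ ^ 2 ≤ (B x x).re := by
      intro x
      refine ge_of_tendsto ((Complex.continuous_re.tendsto _).comp (hB x x))
        (Filter.Eventually.of_forall fun N => ?_)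
      have hreal : g x x N = ((((N + 1 : ℕ) : ℝ)⁻¹ *
          ∑ n ∈ Finset.range (N + 1), ‖(T ^ n) x‖ ^ 2 : ℝ) : ℂ) := by
        rw [hg]
        push_cast
        congr 1
        exact Finset.sum_congr rfl fun n _ => inner_self_eq_norm_sq_to_K _
      show c ^ 2 * ‖x‖ ^ 2 ≤ (g x x N).re
      rw [hreal, Complex.ofReal_re]
      have hsum : ((N + 1 : ℕ) : ℝ) * (c ^ 2 * ‖x‖ ^ 2) ≤
          ∑ n ∈ Finset.range (N + 1), ‖(T ^ n) x‖ ^ 2 := by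
        have := Finset.card_nsmul_le_sum (Finset.range (N + 1))
          (fun n => ‖(T ^ n) x‖ ^ 2) (c ^ 2 * ‖x‖ ^ 2) ?_
        · simpa [nsmul_eq_mul] using this
        · intro n _
          have h1 : c * ‖x‖ ≤ ‖(T ^ n) x‖ := hlow x n
          have h2 : 0 ≤ c * ‖x‖ := by positivity
          calc c ^ 2 * ‖x‖ ^ 2 = (c * ‖x‖) ^ 2 := by ring
            _ ≤ ‖(T ^ n) x‖ ^ 2 := by gcongr
      calc c ^ 2 * ‖x‖ ^ 2
          = ((N + 1 : ℕ) : ℝ)⁻¹ * (((N + 1 : ℕ) : ℝ) * (c ^ 2 * ‖x‖ ^ 2)) := by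
            field_simp
        _ ≤ ((N + 1 : ℕ) : ℝ)⁻¹ * ∑ n ∈ Finset.range (N + 1), ‖(T ^ n) x‖ ^ 2 := by
            gcongr
    -- first-argument (conjugate-)linearity
    have hBadd1 : ∀ x x' y : H, B (x + x') y = B x y + B x' y := by
      intro x x' y
      rw [← hconj y (x + x'), hBadd2, map_add, hconj, hconj]
    have hBsmul1 : ∀ (a : ℂ) (x y : H), B (a • x) y = conj a * B x y := by
      intro a x y
      rw [← hconj y (a • x), hBsmul2, map_mul, hconj]
    -- construct the operator S with ⟪S x, y⟫ = B x y
    have hSx : ∀ x : H, ∃ z : H, ∀ y : H, ⟪z, y⟫_ℂ = B x y := by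
      intro x
      refine ⟨(InnerProductSpace.toDual ℂ H).symm
        (LinearMap.mkContinuous
          { toFun := fun y => B x y
            map_add' := hBadd2 x
            map_smul' := fun a y => by simpa using hBsmul2 a x y }
          (C ^ 2 * ‖x‖) fun y => by simpa [mul_assoc] using hBnorm x y), fun y => ?_⟩
      rw [InnerProductSpace.toDual_symm_apply]
      rfl
    choose S₀ hS₀ using hSx
    have hS₀add : ∀ x x' : H, S₀ (x + x') = S₀ x + S₀ x' := by
      intro x x'
      refine ext_inner_right ℂ fun y => ?_
      rw [hS₀, hBadd1, inner_add_left, hS₀, hS₀]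
    have hS₀smul : ∀ (a : ℂ) (x : H), S₀ (a • x) = a • S₀ x := by
      intro a x
      refine ext_inner_right ℂ fun y => ?_
      rw [hS₀, hBsmul1, inner_smul_left, hS₀]
    have hS₀bound : ∀ x : H, ‖S₀ x‖ ≤ C ^ 2 * ‖x‖ := by
      intro x
      rcases eq_or_lt_of_le (norm_nonneg (S₀ x)) with h0 | h0
      · rw [← h0]; positivity
      · have h1 : (‖S₀ x‖ : ℂ) ^ 2 = B x (S₀ x) := by
          rw [← hS₀ x (S₀ x)]
          exact (inner_self_eq_norm_sq_to_K (𝕜 := ℂ) (S₀ x)).symm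
        have h2 : ‖S₀ x‖ ^ 2 ≤ C ^ 2 * ‖x‖ * ‖S₀ x‖ := by
          calc ‖S₀ x‖ ^ 2 = ‖(‖S₀ x‖ : ℂ) ^ 2‖ := by
                rw [norm_pow, Complex.norm_real, Real.norm_eq_abs, abs_norm]
            _ = ‖B x (S₀ x)‖ := by rw [h1]
            _ ≤ C ^ 2 * ‖x‖ * ‖S₀ x‖ := hBnorm x (S₀ x)
        rw [pow_two] at h2
        exact le_of_mul_le_mul_right h2 h0
    set S : H →L[ℂ] H := LinearMap.mkContinuous
      { toFun := S₀
        map_add' := hS₀add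
        map_smul' := fun a x => by simpa using hS₀smul a x }
      (C ^ 2) (fun x => by simpa [mul_assoc] using hS₀bound x) with hSdef
    have hS : ∀ x y : H, ⟪S x, y⟫_ℂ = B x y := fun x y => hS₀ x y
    -- S is self-adjoint
    have hSadj : IsSelfAdjoint S := by
      rw [_root_.IsSelfAdjoint, ContinuousLinearMap.star_eq_adjoint]
      symm
      rw [ContinuousLinearMap.eq_adjoint_iff]
      intro x y
      rw [hS, ← inner_conj_symm, hS, ← hconj x y, Complex.conj_conj]
    -- S is positive
    have hSpos : (0 : H →L[ℂ] H) ≤ S := by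
      rw [ContinuousLinearMap.nonneg_iff_isPositive]
      refine ⟨hSadj.isSymmetric, fun x => ?_⟩
      have : ContinuousLinearMap.reApplyInnerSelf S x = (B x x).re := by
        rw [ContinuousLinearMap.reApplyInnerSelf]
        rw [show ⟪S x, x⟫_ℂ = B x x from hS x x]
        rfl
      rw [this]
      exact le_trans (by positivity) (hBre x)
    -- S is invertible
    have hSunit : IsUnit S := by
      refine ContinuousLinearMap.isUnit_of_forall_le_norm_inner_map S
        (c := ⟨c ^ 2, by positivity⟩) (NNReal.coe_pos.mp (pow_pos hc 2 : (0:ℝ) < ((⟨c ^ 2, by positivity⟩ : NNReal) : ℝ))) fun x => ?_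
      calc ‖x‖ ^ 2 * (⟨c ^ 2, by positivity⟩ : NNReal) = c ^ 2 * ‖x‖ ^ 2 := by
            simp [mul_comm]
        _ ≤ (B x x).re := hBre x
        _ ≤ ‖B x x‖ := Complex.abs_re_le_norm _ |>.trans_eq rfl |> (fun h => le_trans (le_abs_self _) h)
        _ = ‖⟪S x, x⟫_ℂ‖ := by rw [hS]
    -- the square root of S
    set X : H →L[ℂ] H := CFC.sqrt S with hXdef
    have hXnn : (0 : H →L[ℂ] H) ≤ X := CFC.sqrt_nonneg (a := S)
    have hXadj : IsSelfAdjoint X := IsSelfAdjoint.of_nonneg hXnn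
    have hX2 : X * X = S := by
      have := CFC.sq_sqrt S hSpos
      rwa [sq] at this
    have hXunit : IsUnit X := by
      obtain ⟨u, hu⟩ := hSunit
      have hcomm : Commute X (↑u : H →L[ℂ] H) := by
        rw [Commute, SemiconjBy, hu, ← hX2, mul_assoc]
      refine ⟨⟨X, X * ↑u⁻¹, ?_, ?_⟩, rfl⟩
      · rw [← mul_assoc, hX2, ← hu, Units.mul_inv]
      · rw [mul_assoc, ← (hcomm.units_inv_right).eq, ← mul_assoc, hX2, ← hu, Units.mul_inv]
    obtain ⟨u, hu⟩ := hXunit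
    set X' : H →L[ℂ] H := ↑u⁻¹ with hX'def
    have hXX' : X ∘L X' = 1 := by
      rw [← ContinuousLinearMap.mul_def, hX'def, ← hu, Units.mul_inv]
    have hX'X : X' ∘L X = 1 := by
      rw [← ContinuousLinearMap.mul_def, hX'def, ← hu, Units.inv_mul]
    have hXX'p : ∀ y, X (X' y) = y := fun y => by simpa using DFunLike.congr_fun hXX' y
    have hX'Xp : ∀ y, X' (X y) = y := fun y => by simpa using DFunLike.congr_fun hX'X y
    have hadjX : ContinuousLinearMap.adjoint X = X := by
      rw [← ContinuousLinearMap.star_eq_adjoint]; exact hXadj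
    have hXin : ∀ w : H, ⟪X w, X w⟫_ℂ = B w w := by
      intro w
      have e := ContinuousLinearMap.adjoint_inner_left X (X w) w
      rw [hadjX] at e
      have e2 : X (X w) = S w := by
        rw [← ContinuousLinearMap.mul_apply, hX2]
      rw [e, e2, ← inner_conj_symm, hS, hconj]
    set V : H →L[ℂ] H := X ∘L T ∘L X' with hVdef
    have hViso : ∀ x : H, ‖V x‖ = ‖x‖ := by
      intro x
      have h1 : ⟪V x, V x⟫_ℂ = ⟪x, x⟫_ℂ := by
        have e1 : V x = X (T (X' x)) := rfl
        rw [e1, hXin (T (X' x)), hBT, ← hXin (X' x), hXX'p]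
      have h3 : ‖V x‖ ^ 2 = ‖x‖ ^ 2 := by
        rw [inner_self_eq_norm_sq_to_K, inner_self_eq_norm_sq_to_K] at h1
        exact_mod_cast h1
      calc ‖V x‖ = Real.sqrt (‖V x‖ ^ 2) := (Real.sqrt_sq (norm_nonneg _)).symm
        _ = Real.sqrt (‖x‖ ^ 2) := by rw [h3]
        _ = ‖x‖ := Real.sqrt_sq (norm_nonneg _)
    refine ⟨X, X', V, hXX', hX'X, hViso, ?_⟩
    ext v
    have : (X' ∘L V ∘L X) v = X' (X (T (X' (X v)))) := rfl
    rw [this, hX'Xp, hX'Xp]
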